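/- Let k ≥ 2, d ≥ 1 and 1 < m < k be integers, and set τ₁ = m·Perm(k−2, m−1) and τ₂ = (m−1)/(k−m). Let Z be any real-valued function on the set of superarms with Z(A) ≠ 0 for every superarm A and ∑_A Z(A) = 1. Fix x ∈ ℝ^d, y ∈ {1,…,k}, and a set S ⊆ {1,…,k} with |S| = m. For each superarm A define the matrix Ũ(A) ∈ ℝ^{k×d} by Ũ(A)_{r,j} = x_j·( 𝟙{y ∈ A}·𝟙{r ∈ A}/(Z(A)·τ₁) − 𝟙{r ∈ S}/m − τ₂ ). Then for every r ∈ {1,…,k} and j ∈ {1,…,d}, ∑_A Z(A)·Ũ(A)_{r,j} = x_j·( 𝟙{r = y} − 𝟙{r ∈ S}/m ); that is, the Z-expectation of Ũ equals the full-information update matrix U with U_{r,j} = x_j·(𝟙{r = y} − 𝟙{r ∈ S}/m). -/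

import Mathlib

open Finset

section aux

lemma count_one_const {m k : ℕ} (y y' : Fin k) :
    #(univ.filter (fun A : Fin m ↪ Fin k => ∃ i, A i = y))
    = #(univ.filter (fun A : Fin m ↪ Fin k => ∃ i, A i = y')) := by
  refine Finset.card_bij' (fun A _ => A.trans (Equiv.swap y y').toEmbedding)
    (fun A _ => A.trans (Equiv.swap y y').toEmbedding) ?_ ?_ ?_ ?_
  · intro A hA
    simp only [mem_filter, mem_univ, true_and] at hA ⊢
    obtain ⟨i, hi⟩ := hA
    exact ⟨i, by simp [Function.Embedding.trans_apply, hi]⟩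
  · intro A hA
    simp only [mem_filter, mem_univ, true_and] at hA ⊢
    obtain ⟨i, hi⟩ := hA
    exact ⟨i, by simp [Function.Embedding.trans_apply, hi]⟩
  · intro A _; ext i; simp [Function.Embedding.trans_apply]
  · intro A _; ext i; simp [Function.Embedding.trans_apply]

lemma count_one_sum {m k : ℕ} :
    ∑ y : Fin k, #(univ.filter (fun A : Fin m ↪ Fin k => ∃ i, A i = y))
    = Fintype.card (Fin m ↪ Fin k) * m := by
  simp_rw [Finset.card_filter]
  rw [Finset.sum_comm]
  have h : ∀ A : Fin m ↪ Fin k,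
      (∑ y : Fin k, if ∃ i, A i = y then 1 else 0) = m := by
    intro A
    rw [Finset.sum_boole]
    have : (univ.filter (fun y => ∃ i, A i = y)) = univ.image A := by
      ext z; simp [eq_comm]
    rw [this, Finset.card_image_of_injective _ A.injective]
    simp
  simp_rw [h]
  simp [Finset.card_univ, mul_comm]

lemma count_two_const {m k : ℕ} {y r r' : Fin k} (hr : r ≠ y) (hr' : r' ≠ y) :
    #(univ.filter (fun A : Fin m ↪ Fin k => (∃ i, A i = y) ∧ (∃ i, A i = r)))
    = #(univ.filter (fun A : Fin m ↪ Fin k => (∃ i, A i = y) ∧ (∃ i, A i = r'))) := by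
  refine Finset.card_bij' (fun A _ => A.trans (Equiv.swap r r').toEmbedding)
    (fun A _ => A.trans (Equiv.swap r r').toEmbedding) ?_ ?_ ?_ ?_
  · intro A hA
    simp only [mem_filter, mem_univ, true_and] at hA ⊢
    obtain ⟨⟨i, hi⟩, ⟨i', hi'⟩⟩ := hA
    exact ⟨⟨i, by simp [Function.Embedding.trans_apply, hi,
        Equiv.swap_apply_of_ne_of_ne hr.symm hr'.symm]⟩,
      ⟨i', by simp [Function.Embedding.trans_apply, hi']⟩⟩
  · intro A hA
    simp only [mem_filter, mem_univ, true_and] at hA ⊢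
    obtain ⟨⟨i, hi⟩, ⟨i', hi'⟩⟩ := hA
    exact ⟨⟨i, by simp [Function.Embedding.trans_apply, hi,
        Equiv.swap_apply_of_ne_of_ne hr.symm hr'.symm]⟩,
      ⟨i', by simp [Function.Embedding.trans_apply, hi']⟩⟩
  · intro A _; ext i; simp [Function.Embedding.trans_apply]
  · intro A _; ext i; simp [Function.Embedding.trans_apply]

lemma count_two_sum {m k : ℕ} (y : Fin k) :
    ∑ r ∈ univ.erase y,
        #(univ.filter (fun A : Fin m ↪ Fin k => (∃ i, A i = y) ∧ (∃ i, A i = r)))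
    = #(univ.filter (fun A : Fin m ↪ Fin k => ∃ i, A i = y)) * (m - 1) := by
  simp_rw [Finset.card_filter]
  rw [Finset.sum_comm]
  have h : ∀ A : Fin m ↪ Fin k,
      (∑ r ∈ univ.erase y, if (∃ i, A i = y) ∧ (∃ i, A i = r) then 1 else 0)
      = (if (∃ i, A i = y) then 1 else 0) * (m - 1) := by
    intro A
    by_cases hy : ∃ i, A i = y
    · simp only [hy, true_and, if_true, one_mul]
      rw [Finset.sum_boole]
      have : ((univ.erase y).filter (fun r => ∃ i, A i = r))
          = (univ.image A).erase y := by
        ext z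
        simp only [mem_filter, mem_erase, mem_univ, mem_image, true_and, and_true]
      rw [this, Finset.card_erase_of_mem (by simpa [eq_comm] using hy),
        Finset.card_image_of_injective _ A.injective]
      simp
    · simp [hy]
  simp_rw [h]
  rw [Finset.sum_mul]

/-- exact count of embeddings hitting y -/
lemma count_one_eq {m' k' : ℕ} (hmk : m' < k') (y : Fin (k' + 2)) :
    #(univ.filter (fun A : Fin (m' + 2) ↪ Fin (k' + 2) => ∃ i, A i = y))
    = (m' + 2) * ((k' + 1) * Nat.descFactorial k' m') := by
  have hsum := count_one_sum (m := m' + 2) (k := k' + 2)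
  have hconst : ∀ y' : Fin (k' + 2),
      #(univ.filter (fun A : Fin (m' + 2) ↪ Fin (k' + 2) => ∃ i, A i = y'))
      = #(univ.filter (fun A : Fin (m' + 2) ↪ Fin (k' + 2) => ∃ i, A i = y)) :=
    fun y' => count_one_const y' y
  rw [Finset.sum_congr rfl (fun y' _ => hconst y'), Finset.sum_const,
    Finset.card_univ, Fintype.card_fin, smul_eq_mul] at hsum
  have hN : Fintype.card (Fin (m' + 2) ↪ Fin (k' + 2))
      = (k' + 2) * ((k' + 1) * Nat.descFactorial k' m') := by
    rw [Fintype.card_embedding_eq, Fintype.card_fin, Fintype.card_fin,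
      Nat.succ_descFactorial_succ, Nat.succ_descFactorial_succ]
  refine Nat.eq_of_mul_eq_mul_left (show 0 < k' + 2 by omega) ?_
  rw [hsum, hN]; ring

/-- exact count of embeddings hitting both y and r, r ≠ y -/
lemma count_two_eq {m' k' : ℕ} (hmk : m' < k') {y r : Fin (k' + 2)} (hr : r ≠ y) :
    #(univ.filter (fun A : Fin (m' + 2) ↪ Fin (k' + 2) =>
        (∃ i, A i = y) ∧ (∃ i, A i = r)))
    = (m' + 2) * ((m' + 1) * Nat.descFactorial k' m') := by
  have hsum := count_two_sum (m := m' + 2) (k := k' + 2) y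
  have hconst : ∀ r' ∈ univ.erase y,
      #(univ.filter (fun A : Fin (m' + 2) ↪ Fin (k' + 2) =>
          (∃ i, A i = y) ∧ (∃ i, A i = r')))
      = #(univ.filter (fun A : Fin (m' + 2) ↪ Fin (k' + 2) =>
          (∃ i, A i = y) ∧ (∃ i, A i = r))) := by
    intro r' hr'
    exact count_two_const (Finset.mem_erase.mp hr').1 hr
  rw [Finset.sum_congr rfl hconst, Finset.sum_const,
    Finset.card_erase_of_mem (Finset.mem_univ y), Finset.card_univ,
    Fintype.card_fin, smul_eq_mul, count_one_eq hmk y] at hsum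
  refine Nat.eq_of_mul_eq_mul_left (show 0 < k' + 2 - 1 by omega) ?_
  rw [hsum]
  have : k' + 2 - 1 = k' + 1 := by omega
  rw [this]
  have : m' + 2 - 1 = m' + 1 := by omega
  rw [this]
  ring

end aux

/-- Unbiasedness of the MC-DBF update matrix. With
`τ₁ = m·Perm(k−2, m−1)`, `τ₂ = (m−1)/(k−m)`, and any probability weights `Z`
on superarms (nonzero, summing to 1), the Z-expectation of
`Ũ(A)_{r,j} = x_j·(𝟙{y∈A}·𝟙{r∈A}/(Z(A)·τ₁) − 𝟙{r∈S}/m − τ₂)` equals the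
full-information update `U_{r,j} = x_j·(𝟙{r = y} − 𝟙{r ∈ S}/m)`. -/
theorem dbf_update_unbiased
    (k d m : ℕ) (hk : 2 ≤ k) (hd : 1 ≤ d) (hm1 : 1 < m) (hmk : m < k)
    (τ₁ τ₂ : ℝ)
    (hτ₁ : τ₁ = m * Nat.descFactorial (k - 2) (m - 1))
    (hτ₂ : τ₂ = ((m : ℝ) - 1) / ((k : ℝ) - m))
    (Z : (Fin m ↪ Fin k) → ℝ)
    (hZne : ∀ A, Z A ≠ 0) (hZsum : ∑ A, Z A = 1)
    (x : Fin d → ℝ) (y : Fin k)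
    (S : Finset (Fin k)) (hScard : S.card = m) :
    ∀ (r : Fin k) (j : Fin d),
      ∑ A : Fin m ↪ Fin k,
        Z A * (x j *
          ((if ∃ i, A i = y then (1 : ℝ) else 0)
              * (if ∃ i, A i = r then (1 : ℝ) else 0) / (Z A * τ₁)
            - (if r ∈ S then (1 : ℝ) else 0) / m - τ₂))
      = x j * ((if r = y then (1 : ℝ) else 0)
          - (if r ∈ S then (1 : ℝ) else 0) / m) := by
  intro r j
  obtain ⟨m', rfl⟩ : ∃ m', m = m' + 2 := ⟨m - 2, by omega⟩
  obtain ⟨k', rfl⟩ : ∃ k', k = k' + 2 := ⟨k - 2, by omega⟩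
  have hm'k' : m' < k' := by omega
  -- rewrite τ₁ in convenient form
  have hD2 : (0 : ℕ) < Nat.descFactorial k' m' := by
    refine Nat.pos_of_ne_zero ?_
    rw [Ne, Nat.descFactorial_eq_zero_iff_lt, not_lt]
    omega
  set D2 : ℕ := Nat.descFactorial k' m' with hD2def
  have hτ₁' : τ₁ = ((m' + 2) * ((k' - m') * D2) : ℕ) := by
    rw [hτ₁]
    have h1 : k' + 2 - 2 = k' := by omega
    have h2 : m' + 2 - 1 = m' + 1 := by omega
    rw [h1, h2, Nat.descFactorial_succ]
    push_cast
    ring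
  have hτ₁ne : τ₁ ≠ 0 := by
    rw [hτ₁']
    have : (0:ℕ) < (m' + 2) * ((k' - m') * D2) :=
      Nat.mul_pos (by omega) (Nat.mul_pos (by omega) hD2)
    exact_mod_cast this.ne'
  have hm2ne : ((m' : ℝ) + 2) ≠ 0 := by positivity
  have hKne' : (k' : ℝ) - m' ≠ 0 := by
    have : (m' : ℝ) < k' := by exact_mod_cast hm'k'
    linarith
  have hD2ne : ((D2 : ℕ) : ℝ) ≠ 0 := by exact_mod_cast hD2.ne'
  have hτ₁R : τ₁ = ((m' : ℝ) + 2) * ((((k' : ℝ) - m')) * (D2 : ℝ)) := by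
    rw [hτ₁']
    push_cast [Nat.cast_sub hm'k'.le]
    ring
  have hτ₂R : τ₂ = ((m' : ℝ) + 1) / ((k' : ℝ) - m') := by
    rw [hτ₂]
    push_cast
    congr 1 <;> ring
  -- the key per-term rewrite
  set c : ℝ := (if r ∈ S then (1 : ℝ) else 0) / ((m' + 2 : ℕ) : ℝ) + τ₂ with hc
  have alg : ∀ (P q z : ℝ), z ≠ 0 →
      z * (x j * (P / (z * τ₁) - q - τ₂))
      = x j / τ₁ * P - (x j * (q + τ₂)) * z := by
    intro P q z hz
    field_simp
    ring
  have key : ∀ A : Fin (m' + 2) ↪ Fin (k' + 2),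
      Z A * (x j *
          ((if ∃ i, A i = y then (1 : ℝ) else 0)
              * (if ∃ i, A i = r then (1 : ℝ) else 0) / (Z A * τ₁)
            - (if r ∈ S then (1 : ℝ) else 0) / ((m' + 2 : ℕ) : ℝ) - τ₂))
      = x j / τ₁ * (if (∃ i, A i = y) ∧ (∃ i, A i = r) then (1 : ℝ) else 0)
        - (x j * c) * Z A := by
    intro A
    have hP : (if ∃ i, A i = y then (1 : ℝ) else 0)
        * (if ∃ i, A i = r then (1 : ℝ) else 0)
        = (if (∃ i, A i = y) ∧ (∃ i, A i = r) then (1 : ℝ) else 0) := by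
      rw [ite_zero_mul_ite_zero, one_mul]
    rw [hP, hc]
    exact alg _ _ _ (hZne A)
  rw [Finset.sum_congr rfl (fun A _ => key A), Finset.sum_sub_distrib,
    ← Finset.mul_sum, ← Finset.mul_sum, hZsum, Finset.sum_boole, mul_one]
  by_cases hry : r = y
  · subst hry
    have hcount : (univ.filter (fun A : Fin (m' + 2) ↪ Fin (k' + 2) =>
        (∃ i, A i = r) ∧ (∃ i, A i = r))) =
        (univ.filter (fun A : Fin (m' + 2) ↪ Fin (k' + 2) => ∃ i, A i = r)) := by
      simp [and_self]
    rw [hcount, count_one_eq hm'k' r, if_pos rfl, hc]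
    have h1 : (((m' + 2) * ((k' + 1) * D2) : ℕ) : ℝ) / τ₁ - τ₂ = 1 := by
      rw [hτ₁R, hτ₂R]
      push_cast
      field_simp
      ring
    push_cast at h1 ⊢
    linear_combination x j * h1
  · rw [count_two_eq hm'k' hry, if_neg hry, hc]
    have h2 : (((m' + 2) * ((m' + 1) * D2) : ℕ) : ℝ) / τ₁ = τ₂ := by
      rw [hτ₁R, hτ₂R]
      push_cast
      field_simp
    push_cast at h2 ⊢
    linear_combination x j * h2
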